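/- Let $k$ be a field of characteristic different from $2$ and let $V$ be a finite-dimensional $k$-vector space. Let $u, v$ be linearly independent linear forms on $V$ and let $u_1,v_1,w_1$ be linear forms on $V$ satisfying $w_1(x)^{2} - u_1(x)v_1(x) = -u(x)v(x)$ for all $x \in V$. Then there exists a $3\times 3$ matrix $A = (A_{ij})$ over $k$ with $A^{*}\Omega A = \Omega$ such that $u_1 = A_{00}u + A_{01}v$, $v_1 = A_{10}u + A_{11}v$, and $w_1 = A_{20}u + A_{21}v$; that is, the triple $(u_1,v_1,w_1)$ is obtained from the triple $(u,v,0)$ by the action of an element of $\mathbf{O}_3(\Omega)$. -/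

import Mathlib

open Matrix

/-- The symmetric matrix Ω with rows (0,-1/2,0), (-1/2,0,0), (0,0,1). -/
def Omega (k : Type*) [Field k] : Matrix (Fin 3) (Fin 3) k :=
  !![0, -(1/2), 0; -(1/2), 0, 0; 0, 0, 1]

lemma aux_exists_dual_pair {k V : Type*} [Field k] [AddCommGroup V] [Module k V]
    (u v : V →ₗ[k] k) (h : ∀ c : k, u ≠ c • v) : ∃ y, u y = 1 ∧ v y = 0 := by
  by_cases hker : ∀ x, v x = 0 → u x = 0
  · exfalso
    by_cases hv : v = 0
    · exact h 0 (by ext x; simpa using hker x (by simp [hv]))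
    · obtain ⟨z₀, hz₀⟩ : ∃ z₀, v z₀ ≠ 0 := by
        by_contra hc; push_neg at hc; exact hv (by ext x; simpa using hc x)
      apply h (u z₀ / v z₀)
      ext x
      have hv0 : v (x - (v x / v z₀) • z₀) = 0 := by
        simp only [map_sub, _root_.map_smul, smul_eq_mul]
        field_simp
        ring
      have h0 := hker _ hv0
      simp only [map_sub, _root_.map_smul, smul_eq_mul, sub_eq_zero] at h0
      simp only [LinearMap.smul_apply, smul_eq_mul]
      rw [h0]; field_simp
  · push_neg at hker
    obtain ⟨x, hvx, hux⟩ := hker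
    exact ⟨(u x)⁻¹ • x, by simp [inv_mul_cancel₀ hux], by simp [hvx]⟩

lemma aux_O3_check {k : Type*} [Field k] (h2 : (2 : k) ≠ 0) (α β γ δ ε ζ : k)
    (r1 : ε^2 = α*γ) (r2 : ζ^2 = β*δ) (r3 : 2*ε*ζ = α*δ + β*γ - 1) :
    (!![α, β, 2*(β*ε - α*ζ); γ, δ, 2*(γ*ζ - δ*ε); ε, ζ, β*γ - α*δ])ᵀ * Omega k *
      !![α, β, 2*(β*ε - α*ζ); γ, δ, 2*(γ*ζ - δ*ε); ε, ζ, β*γ - α*δ] = Omega k := by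
  have ht : (!![α, β, 2*(β*ε - α*ζ); γ, δ, 2*(γ*ζ - δ*ε); ε, ζ, β*γ - α*δ])ᵀ =
      !![α, γ, ε; β, δ, ζ; 2*(β*ε - α*ζ), 2*(γ*ζ - δ*ε), β*γ - α*δ] := by
    ext i j; fin_cases i <;> fin_cases j <;> rfl
  rw [ht]
  ext i j
  fin_cases i <;> fin_cases j <;>
    simp [Omega, Matrix.mul_apply, Fin.sum_univ_three, Matrix.vecHead, Matrix.vecTail]
  all_goals try field_simp
  all_goals try ring
  any_goals linear_combination 2*r1
  any_goals linear_combination 2*r2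
  any_goals linear_combination r3
  all_goals linear_combination (4*β*δ - 4*ζ^2) * r1 + (2*ε*ζ - α*δ - β*γ - 1) * r3

/-- If `u, v` are linearly independent linear forms and `w₁² - u₁v₁ = -uv` as
quadratic forms, then there is a matrix `A ∈ O₃(Ω)` taking the column triple
`(u, v, 0)` to `(u₁, v₁, w₁)`. -/
theorem exists_O3_matrix_of_rank_two {k V : Type*} [Field k] [AddCommGroup V]
    [Module k V] [FiniteDimensional k V] (h2 : (2 : k) ≠ 0)
    (u v : V →ₗ[k] k) (hli : LinearIndependent k ![u, v])
    (u₁ v₁ w₁ : V →ₗ[k] k)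
    (heq : ∀ x : V, w₁ x ^ 2 - u₁ x * v₁ x = -(u x * v x)) :
    ∃ A : Matrix (Fin 3) (Fin 3) k, Aᵀ * Omega k * A = Omega k ∧
      u₁ = A 0 0 • u + A 0 1 • v ∧
      v₁ = A 1 0 • u + A 1 1 • v ∧
      w₁ = A 2 0 • u + A 2 1 • v := by
  have hli' : ∀ s t : k, s • u + t • v = 0 → s = 0 ∧ t = 0 := by
    intro s t hst
    have h := Fintype.linearIndependent_iff.mp hli ![s, t]
      (by simpa [Fin.sum_univ_two] using hst)
    exact ⟨h 0, h 1⟩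
  have h1 : ∀ c : k, u ≠ c • v := by
    intro c hc
    have := (hli' 1 (-c) (by rw [hc]; module)).1
    exact one_ne_zero this
  have h1' : ∀ c : k, v ≠ c • u := by
    intro c hc
    have := (hli' (-c) 1 (by rw [hc]; module)).2
    exact one_ne_zero this
  obtain ⟨y, huy, hvy⟩ := aux_exists_dual_pair u v h1
  obtain ⟨z, hvz, huz⟩ := aux_exists_dual_pair v u h1'
  -- a linear form whose square is `-d·uv` everywhere forces `d = 0`
  have hzero : ∀ s : V →ₗ[k] k, ∀ d : k, (∀ t, s t ^ 2 = -(d * (u t * v t))) → d = 0 := by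
    intro s d hs
    have hy0 : s y = 0 := by
      have h := hs y; rw [huy, hvy] at h
      exact pow_eq_zero_iff two_ne_zero |>.mp (by linear_combination h)
    have hz0 : s z = 0 := by
      have h := hs z; rw [huz, hvz] at h
      exact pow_eq_zero_iff two_ne_zero |>.mp (by linear_combination h)
    have h3 := hs (y + z)
    simp only [map_add] at h3
    rw [hy0, hz0, huy, hvy, huz, hvz] at h3
    linear_combination h3
  -- u₁, v₁, w₁ vanish on ker u ∩ ker v
  have hvan : ∀ x, u x = 0 → v x = 0 → u₁ x = 0 ∧ v₁ x = 0 ∧ w₁ x = 0 := by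
    intro x hux hvx
    have hcc : w₁ x ^ 2 = u₁ x * v₁ x := by
      linear_combination heq x - v x * hux
    have hpol : ∀ t, 2 * w₁ x * w₁ t = u₁ x * v₁ t + v₁ x * u₁ t := by
      intro t
      have e1 := heq (x + t)
      simp only [map_add] at e1
      linear_combination e1 - heq t - hcc - (v x + v t) * hux - u t * hvx
    have ha : u₁ x = 0 := by
      refine pow_eq_zero_iff two_ne_zero |>.mp
        (hzero (u₁ x • w₁ - w₁ x • u₁) ((u₁ x) ^ 2) ?_)
      intro t
      simp only [LinearMap.sub_apply, LinearMap.smul_apply, smul_eq_mul]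
      linear_combination (u₁ x) ^ 2 * heq t - (u₁ x * u₁ t) * hpol t + (u₁ t) ^ 2 * hcc
    have hb : v₁ x = 0 := by
      refine pow_eq_zero_iff two_ne_zero |>.mp
        (hzero (v₁ x • w₁ - w₁ x • v₁) ((v₁ x) ^ 2) ?_)
      intro t
      simp only [LinearMap.sub_apply, LinearMap.smul_apply, smul_eq_mul]
      linear_combination (v₁ x) ^ 2 * heq t - (v₁ x * v₁ t) * hpol t + (v₁ t) ^ 2 * hcc
    have hc : w₁ x = 0 := by
      refine pow_eq_zero_iff two_ne_zero |>.mp ?_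
      rw [hcc, ha, hb]; ring
    exact ⟨ha, hb, hc⟩
  -- hence they are combinations of u and v
  have hrep : ∀ f : V →ₗ[k] k, (∀ x, u x = 0 → v x = 0 → f x = 0) →
      ∀ x, f x = u x * f y + v x * f z := by
    intro f hf x
    have h0 := hf (x - u x • y - v x • z)
      (by simp only [map_sub, _root_.map_smul, smul_eq_mul, huy, huz]; ring)
      (by simp only [map_sub, _root_.map_smul, smul_eq_mul, hvy, hvz]; ring)
    simp only [map_sub, _root_.map_smul, smul_eq_mul, sub_eq_zero] at h0
    linear_combination h0
  have Hu := hrep u₁ (fun x hx1 hx2 => (hvan x hx1 hx2).1)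
  have Hv := hrep v₁ (fun x hx1 hx2 => (hvan x hx1 hx2).2.1)
  have Hw := hrep w₁ (fun x hx1 hx2 => (hvan x hx1 hx2).2.2)
  -- the three coefficient relations
  have r1 : w₁ y ^ 2 = u₁ y * v₁ y := by
    have h := heq y; rw [huy, hvy] at h; linear_combination h
  have r2 : w₁ z ^ 2 = u₁ z * v₁ z := by
    have h := heq z; rw [huz, hvz] at h; linear_combination h
  have r3 : 2 * w₁ y * w₁ z = u₁ y * v₁ z + u₁ z * v₁ y - 1 := by
    have h := heq (y + z)
    simp only [map_add] at h
    rw [huy, hvy, huz, hvz] at h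
    linear_combination h - r1 - r2
  refine ⟨!![u₁ y, u₁ z, 2*(u₁ z * w₁ y - u₁ y * w₁ z);
             v₁ y, v₁ z, 2*(v₁ y * w₁ z - v₁ z * w₁ y);
             w₁ y, w₁ z, u₁ z * v₁ y - u₁ y * v₁ z], ?_, ?_, ?_, ?_⟩
  · exact aux_O3_check h2 (u₁ y) (u₁ z) (v₁ y) (v₁ z) (w₁ y) (w₁ z) r1 r2 r3
  · show u₁ = u₁ y • u + u₁ z • v
    ext x
    simp only [LinearMap.add_apply, LinearMap.smul_apply, smul_eq_mul]
    linear_combination Hu x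
  · show v₁ = v₁ y • u + v₁ z • v
    ext x
    simp only [LinearMap.add_apply, LinearMap.smul_apply, smul_eq_mul]
    linear_combination Hv x
  · show w₁ = w₁ y • u + w₁ z • v
    ext x
    simp only [LinearMap.add_apply, LinearMap.smul_apply, smul_eq_mul]
    linear_combination Hw x
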